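/- Let R and S be Dyck paths of the same length 2n, both avoiding three consecutive north steps NNN, and let P = φ(R), Q = φ(S) be the corresponding Motzkin paths. Then Q covers P in the partial order on Motzkin paths if and only if S covers R in the Tamari order on Dyck paths and Type(R) = Type(S). -/

import Mathlib

/-- Steps: north `N = (0,1)`, east `E = (1,0)`, diagonal `D = (1,1)`. -/
inductive MStep : Type
  | N | E | D
  deriving DecidableEq

/-- The contribution of a step to the height `y - x` above the diagonal. -/
def MStep.hdiff : MStep → ℤ
  | .N => 1
  | .E => -1
  | .D => 0

/-- The total height change `y - x` along a word of steps. -/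
def wsum (p : List MStep) : ℤ := (p.map MStep.hdiff).sum

/-- A (nonempty) Motzkin path: starts at the origin, never goes below the
diagonal `y = x`, and ends on the diagonal. -/
def IsMotzkin (p : List MStep) : Prop :=
  p ≠ [] ∧ (∀ q, q <+: p → 0 ≤ wsum q) ∧ wsum p = 0

/-- A Dyck path is a Motzkin path with no diagonal step. -/
def IsDyck (p : List MStep) : Prop := IsMotzkin p ∧ MStep.D ∉ p

/-- A path is primitive if it touches the diagonal only at its endpoints. -/
def IsPrimitive (p : List MStep) : Prop :=
  IsMotzkin p ∧ ∀ q, q <+: p → q ≠ [] → q ≠ p → 0 < wsum q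

/-- Covering relation for the Tamari-type order on Motzkin paths:
`Q` covers `P` iff `P = P₁·E·P₂·P₃` and `Q = P₁·P₂·E·P₃` with `P₂` a nonempty
primitive Motzkin path. -/
def MCover (P Q : List MStep) : Prop :=
  ∃ P₁ P₂ P₃ : List MStep, IsMotzkin P₂ ∧ IsPrimitive P₂ ∧
    P = P₁ ++ [MStep.E] ++ P₂ ++ P₃ ∧ Q = P₁ ++ P₂ ++ [MStep.E] ++ P₃

/-- Covering relation of the Tamari order on Dyck paths. -/
def DCover (P Q : List MStep) : Prop :=
  ∃ P₁ P₂ P₃ : List MStep, IsDyck P₂ ∧ IsPrimitive P₂ ∧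
    P = P₁ ++ [MStep.E] ++ P₂ ++ P₃ ∧ Q = P₁ ++ P₂ ++ [MStep.E] ++ P₃

/-- The partial order `≤_M` on Motzkin paths. -/
def MLE : List MStep → List MStep → Prop := Relation.ReflTransGen MCover

/-- The Tamari order `≤_D` on Dyck paths. -/
def DLE : List MStep → List MStep → Prop := Relation.ReflTransGen DCover

/-- Heights of the diagonal steps along a path, starting from height `h`. -/
def clsFrom : List MStep → ℤ → List ℤ
  | [], _ => []
  | .N :: rest, h => clsFrom rest (h + 1)
  | .E :: rest, h => clsFrom rest h
  | .D :: rest, h => (h + 1) :: clsFrom rest (h + 1)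

/-- The class of a Motzkin path: the sequence of heights (ending `y`-coordinates)
of its diagonal steps, in the order they occur. -/
def cls (p : List MStep) : List ℤ := clsFrom p 0

/-- A path avoids `NNN` if it has no three consecutive north steps. -/
def AvoidsNNN (p : List MStep) : Prop := ¬ ([MStep.N, MStep.N, MStep.N] <:+: p)

/-- Callan's bijection `φ`: replace each factor `NE` by `D` and each factor
`NNE` by `N`, leaving remaining east steps unchanged. -/
def phi : List MStep → List MStep
  | [] => []
  | .N :: .N :: .E :: rest => .N :: phi rest
  | .N :: .E :: rest => .D :: phi rest
  | s :: rest => s :: phi rest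

/-- The inverse of `φ`: replace each `D` by `NE` and each `N` by `NNE`. -/
def psi : List MStep → List MStep
  | [] => []
  | .N :: rest => .N :: .N :: .E :: psi rest
  | .D :: rest => .N :: .E :: psi rest
  | .E :: rest => .E :: psi rest

/-- For each north step of the path (in order), record `N` if it is immediately
followed by an east step and `E` otherwise. -/
def typeRaw : List MStep → List MStep
  | [] => []
  | .N :: rest => (if rest.head? = some MStep.E then MStep.N else MStep.E) :: typeRaw rest
  | _ :: rest => typeRaw rest

/-- The type of a Dyck path of length `2n`: the word of length `n - 1` whose
`i`-th letter is `N` iff the `i`-th north step is immediately followed by an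
east step (the letter of the last north step is dropped). -/
def typeW (p : List MStep) : List MStep := (typeRaw p).dropLast

/-- `ds p` is the number of north steps of `p` that are neither immediately
preceded nor immediately followed by another north step. -/
def ds (p : List MStep) : ℕ :=
  ((Finset.range p.length).filter (fun i =>
    p[i]? = some MStep.N ∧ p[i + 1]? ≠ some MStep.N ∧
      (i = 0 ∨ p[i - 1]? ≠ some MStep.N))).card

/-- The number of contacts of a path with the diagonal `y = x` (lattice points
of the path lying on the diagonal, endpoints included). -/
def cont (p : List MStep) : ℕ :=
  ((Finset.range (p.length + 1)).filter (fun i => wsum (p.take i) = 0)).card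


/-! ### Auxiliary lemmas -/

@[simp] lemma wsum_nil : wsum [] = 0 := rfl

@[simp] lemma wsum_cons (a : MStep) (l : List MStep) :
    wsum (a :: l) = a.hdiff + wsum l := by simp [wsum]

@[simp] lemma wsum_append (u v : List MStep) : wsum (u ++ v) = wsum u + wsum v := by
  simp [wsum]

@[simp] lemma psi_nil : psi [] = [] := rfl

lemma psi_append (u v : List MStep) : psi (u ++ v) = psi u ++ psi v := by
  induction u with
  | nil => rfl
  | cons a t ih => cases a <;> simp [psi, ih]

@[simp] lemma wsum_psi (l : List MStep) : wsum (psi l) = wsum l := by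
  induction l with
  | nil => rfl
  | cons a t ih => cases a <;> simp [psi, MStep.hdiff, ih]

@[simp] lemma psi_eq_nil_iff (l : List MStep) : psi l = [] ↔ l = [] := by
  cases l with
  | nil => simp
  | cons a t => cases a <;> simp [psi]

lemma D_notin_psi (l : List MStep) : MStep.D ∉ psi l := by
  induction l with
  | nil => simp
  | cons a t ih => cases a <;> simp [psi, ih]

lemma psi_getLast (l : List MStep) (h : l ≠ []) : (psi l).getLast? = some MStep.E := by
  induction l with
  | nil => simp at h
  | cons a t ih =>
    by_cases ht : t = []
    · subst ht; cases a <;> rfl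
    · have : psi (a :: t) = psi [a] ++ psi t := (psi_append [a] t).symm ▸ rfl
      rw [show (a :: t) = [a] ++ t from rfl, psi_append, List.getLast?_append, ih ht]
      rfl

lemma getLast?_cons_ne_nil {a : MStep} {t : List MStep} (h : t ≠ []) :
    (a :: t).getLast? = t.getLast? := by
  rw [show (a :: t) = [a] ++ t from rfl, List.getLast?_append]
  cases t with
  | nil => simp at h
  | cons b u => simp [List.getLast?_cons_cons]; cases u.getLast? <;> rfl

lemma avoids_of_infix {p R : List MStep} (h : AvoidsNNN R) (hp : p <:+: R) :
    AvoidsNNN p := fun hc => h (hc.trans hp)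

lemma psi_phi (R : List MStep) (hD : MStep.D ∉ R) (hA : AvoidsNNN R)
    (hL : R.getLast? ≠ some MStep.N) : psi (phi R) = R := by
  induction R using phi.induct with
  | case1 => rfl
  | case2 rest ih =>
    have hD' : MStep.D ∉ rest := fun h => hD (by simp [h])
    have hA' : AvoidsNNN rest := avoids_of_infix hA
      (List.infix_cons (List.infix_cons (List.infix_cons (List.infix_refl _))))
    have hL' : rest.getLast? ≠ some MStep.N := by
      by_cases h : rest = []
      · subst h; simp
      · rwa [getLast?_cons_ne_nil (by simp), getLast?_cons_ne_nil (by simp),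
          getLast?_cons_ne_nil h] at hL
    simp [phi, psi, ih hD' hA' hL']
  | case3 rest ih =>
    have hD' : MStep.D ∉ rest := fun h => hD (by simp [h])
    have hA' : AvoidsNNN rest := avoids_of_infix hA
      (List.infix_cons (List.infix_cons (List.infix_refl _)))
    have hL' : rest.getLast? ≠ some MStep.N := by
      by_cases h : rest = []
      · subst h; simp
      · rwa [getLast?_cons_ne_nil (by simp), getLast?_cons_ne_nil h] at hL
    simp [phi, psi, ih hD' hA' hL']
  | case4 s rest h1 h2 ih =>
    -- s :: rest doesn't match NNE or NE patterns
    cases s with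
    | D => exact absurd (by simp) hD
    | E =>
      have hD' : MStep.D ∉ rest := fun h => hD (by simp [h])
      have hA' : AvoidsNNN rest := avoids_of_infix hA (List.infix_cons (List.infix_refl _))
      have hL' : rest.getLast? ≠ some MStep.N := by
        by_cases h : rest = []
        · subst h; simp
        · rwa [getLast?_cons_ne_nil h] at hL
      simp [phi, psi, ih hD' hA' hL']
    | N =>
      cases rest with
      | nil => simp at hL
      | cons b t =>
        cases b with
        | E => exact absurd rfl (h2 t rfl)
        | D => exact absurd (by simp) hD
        | N =>
          cases t with
          | nil =>
            exfalso; apply hL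
            rfl
          | cons c u =>
            cases c with
            | E => exact absurd rfl (h1 u rfl)
            | D => exact absurd (by simp) hD
            | N =>
              exfalso; apply hA
              exact ⟨[], u, by simp⟩

lemma phi_append (u v : List MStep) (h : u = [] ∨ u.getLast? = some MStep.E) :
    phi (u ++ v) = phi u ++ phi v := by
  induction u using phi.induct with
  | case1 => simp [phi]
  | case2 rest ih =>
    have h' : rest = [] ∨ rest.getLast? = some MStep.E := by
      rcases h with h | h
      · simp at h
      · by_cases hr : rest = []
        · exact Or.inl hr
        · right
          rwa [getLast?_cons_ne_nil (by simp), getLast?_cons_ne_nil (by simp),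
            getLast?_cons_ne_nil hr] at h
    simp [phi, ih h']
  | case3 rest ih =>
    have h' : rest = [] ∨ rest.getLast? = some MStep.E := by
      rcases h with h | h
      · simp at h
      · by_cases hr : rest = []
        · exact Or.inl hr
        · right
          rwa [getLast?_cons_ne_nil (by simp), getLast?_cons_ne_nil hr] at h
    simp [phi, ih h']
  | case4 s rest h1 h2 ih =>
    rcases h with h | h
    · simp at h
    cases s with
    | E =>
      have h' : rest = [] ∨ rest.getLast? = some MStep.E := by
        by_cases hr : rest = []
        · exact Or.inl hr
        · right; rwa [getLast?_cons_ne_nil hr] at h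
      show MStep.E :: phi (rest ++ v) = (MStep.E :: phi rest) ++ phi v
      rw [ih h']; rfl
    | D =>
      have h' : rest = [] ∨ rest.getLast? = some MStep.E := by
        by_cases hr : rest = []
        · exact Or.inl hr
        · right; rwa [getLast?_cons_ne_nil hr] at h
      show MStep.D :: phi (rest ++ v) = (MStep.D :: phi rest) ++ phi v
      rw [ih h']; rfl
    | N =>
      cases rest with
      | nil => simp at h
      | cons b t =>
        have h' : (b :: t) = [] ∨ (b :: t).getLast? = some MStep.E := by
          right; rwa [getLast?_cons_ne_nil (by simp)] at h
        cases b with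
        | E => exact absurd rfl (h2 t rfl)
        | D =>
          show MStep.N :: phi ((MStep.D :: t) ++ v) = (MStep.N :: phi (MStep.D :: t)) ++ phi v
          rw [ih h']; rfl
        | N =>
          cases t with
          | nil => simp at h
          | cons c u =>
            cases c with
            | E => exact absurd rfl (h1 u rfl)
            | D =>
              show MStep.N :: phi ((MStep.N :: MStep.D :: u) ++ v)
                  = (MStep.N :: phi (MStep.N :: MStep.D :: u)) ++ phi v
              rw [ih h']; rfl
            | N =>
              show MStep.N :: phi ((MStep.N :: MStep.N :: u) ++ v)
                  = (MStep.N :: phi (MStep.N :: MStep.N :: u)) ++ phi v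
              rw [ih h']; rfl

lemma motzkin_last {p : List MStep} (hp : IsMotzkin p) (hD : MStep.D ∉ p) :
    p.getLast? = some MStep.E := by
  obtain ⟨hne, hpre, hsum⟩ := hp
  obtain ⟨l, a, rfl⟩ := (List.eq_nil_or_concat' p).resolve_left hne
  have h1 : 0 ≤ wsum l := hpre l ⟨[a], by simp⟩
  have h2 : wsum (l ++ [a]) = 0 := hsum
  simp at h2
  have ha : a.hdiff ≤ 0 := by omega
  cases a with
  | N => simp [MStep.hdiff] at ha
  | E => simp
  | D => exact absurd (by simp) hD

lemma motzkin_head {p : List MStep} (hp : IsMotzkin p) (hD : MStep.D ∉ p) :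
    p.head? = some MStep.N := by
  obtain ⟨hne, hpre, hsum⟩ := hp
  cases p with
  | nil => simp at hne
  | cons a t =>
    have h1 : 0 ≤ wsum [a] := hpre [a] ⟨t, rfl⟩
    simp at h1
    cases a with
    | N => rfl
    | E => simp [MStep.hdiff] at h1
    | D => exact absurd (by simp) hD

lemma prefix_append_cases {q x y : List MStep} (h : q <+: x ++ y) :
    (q <+: x ∧ q.length < x.length) ∨ ∃ q', q' <+: y ∧ q = x ++ q' := by
  rcases lt_or_ge q.length x.length with hl | hl
  · exact Or.inl ⟨List.prefix_of_prefix_length_le h (List.prefix_append x y) hl.le, hl⟩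
  · right
    have hx : x <+: q := List.prefix_of_prefix_length_le (List.prefix_append x y) h hl
    obtain ⟨q', rfl⟩ := hx
    obtain ⟨t, ht⟩ := h
    refine ⟨q', ⟨t, ?_⟩, rfl⟩
    rw [List.append_assoc] at ht
    exact (List.append_cancel_left ht)

lemma psi_pref : ∀ (B q : List MStep), q <+: psi B →
    ∃ u : List MStep, u <+: B ∧ wsum u ≤ wsum q ∧
      (q ≠ [] → u ≠ [] ∨ wsum u < wsum q) ∧ (u = B → q = psi B) := by
  intro B
  induction B with
  | nil =>
    intro q hq
    simp at hq; subst hq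
    exact ⟨[], by simp⟩
  | cons b B' ih =>
    intro q hq
    have hblk : psi (b :: B') = psi [b] ++ psi B' := by
      rw [show (b :: B') = [b] ++ B' from rfl, psi_append]
    rw [hblk] at hq
    rcases prefix_append_cases hq with ⟨hq, hql⟩ | ⟨q', hq', rfl⟩
    · -- q is a prefix of the first block
      refine ⟨[], by simp, ?_, ?_, by simp⟩
      · -- wsum of any prefix of the block is ≥ 0
        cases b with
        | N =>
          simp only [psi] at hq hql
          rcases q with _ | ⟨a1, _ | ⟨a2, _ | ⟨a3, q4⟩⟩⟩ <;>
            simp_all [List.cons_prefix_cons, MStep.hdiff]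
        | E =>
          simp only [psi] at hq hql
          rcases q with _ | ⟨a1, q1⟩ <;> simp_all [List.cons_prefix_cons, MStep.hdiff]
        | D =>
          simp only [psi] at hq hql
          rcases q with _ | ⟨a1, _ | ⟨a2, q2⟩⟩ <;>
            simp_all [List.cons_prefix_cons, MStep.hdiff]
      · intro hqne
        right
        cases b with
        | N =>
          simp only [psi] at hq hql
          rcases q with _ | ⟨a1, _ | ⟨a2, _ | ⟨a3, q4⟩⟩⟩ <;>
            simp_all [List.cons_prefix_cons, MStep.hdiff]
        | E =>
          simp only [psi] at hq hql
          rcases q with _ | ⟨a1, q1⟩ <;> simp_all [List.cons_prefix_cons, MStep.hdiff]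
        | D =>
          simp only [psi] at hq hql
          rcases q with _ | ⟨a1, _ | ⟨a2, q2⟩⟩ <;>
            simp_all [List.cons_prefix_cons, MStep.hdiff]
    · -- q = block ++ q'
      obtain ⟨u', hu', hw1, hw2, hw3⟩ := ih q' hq'
      refine ⟨b :: u', List.cons_prefix_cons.mpr ⟨rfl, hu'⟩, ?_, fun _ => Or.inl (by simp), ?_⟩
      · have : wsum (psi [b]) = wsum [b] := wsum_psi [b]
        simp only [wsum_append, wsum_cons, wsum_nil] at *
        omega
      · intro he
        injection he with he1 he2
        rw [hw3 he2, hblk]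

lemma motzkin_psi {B : List MStep} (hB : IsMotzkin B) : IsMotzkin (psi B) := by
  obtain ⟨hne, hpre, hsum⟩ := hB
  refine ⟨by simpa using hne, ?_, by simpa using hsum⟩
  intro q hq
  obtain ⟨u, hu, hw1, _, _⟩ := psi_pref B q hq
  exact le_trans (hpre u hu) hw1

lemma dyck_psi {B : List MStep} (hB : IsMotzkin B) : IsDyck (psi B) :=
  ⟨motzkin_psi hB, D_notin_psi B⟩

lemma prim_psi {B : List MStep} (hB : IsPrimitive B) : IsPrimitive (psi B) := by
  obtain ⟨hM, hprim⟩ := hB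
  refine ⟨motzkin_psi hM, ?_⟩
  intro q hq hqne hqB
  obtain ⟨u, hu, hw1, hw2, hw3⟩ := psi_pref B q hq
  rcases hw2 hqne with hu0 | hlt
  · by_cases huB : u = B
    · exact absurd (hw3 huB) hqB
    · exact lt_of_lt_of_le (hprim u hu hu0 huB) hw1
  · exact lt_of_le_of_lt (hM.2.1 u hu) hlt

lemma motzkin_of_psi {B : List MStep} (hB : IsMotzkin (psi B)) : IsMotzkin B := by
  obtain ⟨hne, hpre, hsum⟩ := hB
  refine ⟨fun h => hne (by simp [h]), ?_, by simpa using hsum⟩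
  intro q hq
  obtain ⟨r, rfl⟩ := hq
  have : psi q <+: psi (q ++ r) := ⟨psi r, (psi_append q r).symm⟩
  simpa using hpre (psi q) this

lemma prim_of_psi {B : List MStep} (hB : IsPrimitive (psi B)) : IsPrimitive B := by
  obtain ⟨hM, hprim⟩ := hB
  refine ⟨motzkin_of_psi hM, ?_⟩
  intro q hq hqne hqB
  obtain ⟨r, rfl⟩ := hq
  have hr : r ≠ [] := by rintro rfl; simp at hqB
  have h1 : psi q <+: psi (q ++ r) := ⟨psi r, (psi_append q r).symm⟩
  have h2 : psi q ≠ [] := by simpa using hqne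
  have h3 : psi q ≠ psi (q ++ r) := by
    intro h
    have := congrArg List.length h
    rw [psi_append, List.length_append] at this
    have : (psi r).length = 0 := by omega
    exact hr (by simpa using List.length_eq_zero_iff.mp this)
  simpa using hprim (psi q) h1 h2 h3

/-- Lookahead: head of `rest`, defaulting to `o`. -/
def nxt (rest : List MStep) (o : Option MStep) : Option MStep :=
  match rest with
  | [] => o
  | a :: _ => some a

/-- `typeRaw` with a lookahead for what follows the word. -/
def typeRawF : List MStep → Option MStep → List MStep
  | [], _ => []
  | .N :: rest, o => (if nxt rest o = some MStep.E then MStep.N else MStep.E) :: typeRawF rest o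
  | _ :: rest, o => typeRawF rest o

lemma typeRaw_eq_F (u : List MStep) : typeRaw u = typeRawF u none := by
  induction u with
  | nil => rfl
  | cons a u' ih =>
    cases a with
    | N =>
      show (if u'.head? = some MStep.E then MStep.N else MStep.E) :: typeRaw u' = _
      rw [ih]
      have : nxt u' none = u'.head? := by cases u' <;> rfl
      simp [typeRawF, this]
    | E => exact ih
    | D => exact ih

lemma typeRaw_append (u v : List MStep) :
    typeRaw (u ++ v) = typeRawF u v.head? ++ typeRaw v := by
  induction u with
  | nil => rfl
  | cons a u' ih =>
    cases a with
    | N =>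
      show (if (u' ++ v).head? = some MStep.E then MStep.N else MStep.E) :: typeRaw (u' ++ v) = _
      rw [ih]
      have : (u' ++ v).head? = nxt u' v.head? := by cases u' <;> rfl
      simp [typeRawF, this]
    | E => exact ih.trans rfl
    | D => exact ih.trans rfl

lemma typeRawF_irrel (u : List MStep) (h : u.getLast? = some MStep.E) (o o' : Option MStep) :
    typeRawF u o = typeRawF u o' := by
  induction u with
  | nil => rfl
  | cons a u' ih =>
    by_cases hu : u' = []
    · subst hu
      simp at h
      subst h
      rfl
    · have h' : u'.getLast? = some MStep.E := by rwa [getLast?_cons_ne_nil hu] at h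
      have hn : nxt u' o = nxt u' o' := by
        cases u' with | nil => simp at hu | cons b t => rfl
      cases a with
      | N => simp [typeRawF, hn, ih h']
      | E => exact ih h'
      | D => exact ih h'

lemma typeRaw_append_lastE (u v : List MStep) (h : u = [] ∨ u.getLast? = some MStep.E) :
    typeRaw (u ++ v) = typeRaw u ++ typeRaw v := by
  rcases h with rfl | h
  · rfl
  · rw [typeRaw_append, typeRaw_eq_F u, typeRawF_irrel u h]

@[simp] lemma typeRaw_E_cons (v : List MStep) : typeRaw (MStep.E :: v) = typeRaw v := rfl

lemma typeRawF_lastN (u : List MStep) (h : u.getLast? = some MStep.N) :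
    ∃ W, typeRawF u (some MStep.E) = W ++ [MStep.N] ∧
      typeRawF u (some MStep.N) = W ++ [MStep.E] := by
  induction u with
  | nil => simp at h
  | cons a u' ih =>
    by_cases hu : u' = []
    · subst hu
      simp at h
      subst h
      exact ⟨[], rfl, rfl⟩
    · have h' : u'.getLast? = some MStep.N := by rwa [getLast?_cons_ne_nil hu] at h
      obtain ⟨W, hW1, hW2⟩ := ih h'
      have hn : nxt u' (some MStep.E) = nxt u' (some MStep.N) := by
        cases u' with | nil => simp at hu | cons b t => rfl
      cases a with
      | N =>
        refine ⟨(if nxt u' (some MStep.E) = some MStep.E then MStep.N else MStep.E) :: W, ?_, ?_⟩ <;>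
          simp [typeRawF, ← hn, hW1, hW2]
      | E => exact ⟨W, hW1, hW2⟩
      | D => exact ⟨W, hW1, hW2⟩

lemma length_typeRaw (v : List MStep) : (typeRaw v).length = v.count MStep.N := by
  induction v with
  | nil => rfl
  | cons a v' ih =>
    cases a with
    | N =>
      show ((if v'.head? = some MStep.E then MStep.N else MStep.E) :: typeRaw v').length = _
      simp [List.count_cons, ih]
    | E => simpa [List.count_cons] using ih
    | D => show (typeRaw v').length = _; simpa [List.count_cons] using ih

@[simp] lemma phi_E_cons (l : List MStep) : phi (MStep.E :: l) = MStep.E :: phi l := rfl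
/-- For Dyck paths `R, S` of the same length `2n` avoiding
`NNN`, the Motzkin path `φ S` covers `φ R` iff `S` covers `R` in the Tamari
order and `Type(R) = Type(S)`. -/
theorem phi_cover_iff (n : ℕ) (R S : List MStep)
    (hR : IsDyck R) (hS : IsDyck S)
    (hRn : R.length = 2 * n) (hSn : S.length = 2 * n)
    (hRa : AvoidsNNN R) (hSa : AvoidsNNN S) :
    MCover (phi R) (phi S) ↔ (DCover R S ∧ typeW R = typeW S) := by
  constructor
  · rintro ⟨A, B, C, hBM, hBP, hP, hQ⟩
    have hRlast := motzkin_last hR.1 hR.2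
    have hSlast := motzkin_last hS.1 hS.2
    have hRpsi : psi (phi R) = R := psi_phi R hR.2 hRa (by rw [hRlast]; simp)
    have hSpsi : psi (phi S) = S := psi_phi S hS.2 hSa (by rw [hSlast]; simp)
    have hRdec : R = psi A ++ [MStep.E] ++ psi B ++ psi C := by
      rw [← hRpsi, hP, psi_append, psi_append, psi_append]; rfl
    have hSdec : S = psi A ++ psi B ++ [MStep.E] ++ psi C := by
      rw [← hSpsi, hQ, psi_append, psi_append, psi_append]; rfl
    have hBne : B ≠ [] := hBM.1
    have hpsiBlast : (psi B).getLast? = some MStep.E := psi_getLast B hBne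
    have hcondA : psi A = [] ∨ (psi A).getLast? = some MStep.E := by
      by_cases h : A = []
      · left; simp [h]
      · right; exact psi_getLast A h
    have hcondA' : psi A = [] ∨ (psi A).getLast? = some MStep.E := hcondA
    refine ⟨⟨psi A, psi B, psi C, dyck_psi hBM, prim_psi hBP, hRdec, hSdec⟩, ?_⟩
    have hTR : typeRaw R = typeRaw (psi A) ++ (typeRaw (psi B) ++ typeRaw (psi C)) := by
      rw [hRdec, List.append_assoc, List.append_assoc,
        typeRaw_append_lastE _ _ hcondA,
        show [MStep.E] ++ (psi B ++ psi C) = MStep.E :: (psi B ++ psi C) from rfl,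
        typeRaw_E_cons, typeRaw_append_lastE _ _ (Or.inr hpsiBlast)]
    have hTS : typeRaw S = typeRaw (psi A) ++ (typeRaw (psi B) ++ typeRaw (psi C)) := by
      rw [hSdec, List.append_assoc, List.append_assoc,
        typeRaw_append_lastE _ _ hcondA,
        typeRaw_append_lastE _ _ (Or.inr hpsiBlast),
        show [MStep.E] ++ psi C = MStep.E :: psi C from rfl, typeRaw_E_cons]
    unfold typeW
    rw [hTR, hTS]
  · rintro ⟨⟨P₁, P₂, P₃, hP₂D, hP₂P, hRdec, hSdec⟩, hT⟩
    have hD1 : MStep.D ∉ P₁ := fun h => hR.2 (by rw [hRdec]; simp [h])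
    have hP₂last : P₂.getLast? = some MStep.E := motzkin_last hP₂D.1 hP₂D.2
    have hP₂head : P₂.head? = some MStep.N := motzkin_head hP₂D.1 hP₂D.2
    have hcase : (P₁ = [] ∨ P₁.getLast? = some MStep.E) ∨ P₁.getLast? = some MStep.N := by
      rcases hl : P₁.getLast? with _ | a
      · exact Or.inl (Or.inl (List.getLast?_eq_none_iff.mp hl))
      · cases a with
        | E => exact Or.inl (Or.inr rfl)
        | N => exact Or.inr rfl
        | D => exact absurd (List.mem_of_getLast? hl) hD1
    rcases hcase with hcond | hlast
    · -- main case: build the cover of Motzkin paths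
      have hP₂infix : P₂ <:+: R := by rw [hRdec]; exact ⟨P₁ ++ [MStep.E], P₃, by simp⟩
      have hP₂a : AvoidsNNN P₂ := avoids_of_infix hRa hP₂infix
      have hpp : psi (phi P₂) = P₂ := psi_phi P₂ hP₂D.2 hP₂a (by rw [hP₂last]; simp)
      have hM : IsMotzkin (phi P₂) := motzkin_of_psi (by rw [hpp]; exact hP₂D.1)
      have hPr : IsPrimitive (phi P₂) := prim_of_psi (by rw [hpp]; exact hP₂P)
      refine ⟨phi P₁, phi P₂, phi P₃, hM, hPr, ?_, ?_⟩
      · rw [hRdec, List.append_assoc, List.append_assoc, phi_append _ _ hcond]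
        simp only [List.singleton_append, phi_E_cons]
        rw [phi_append P₂ P₃ (Or.inr hP₂last)]
        simp
      · rw [hSdec, List.append_assoc, List.append_assoc, phi_append _ _ hcond,
          phi_append P₂ _ (Or.inr hP₂last)]
        simp only [List.singleton_append, phi_E_cons]
        simp
    · -- impossible case: the type changes
      exfalso
      obtain ⟨W, hW1, hW2⟩ := typeRawF_lastN P₁ hlast
      obtain ⟨t, rfl⟩ : ∃ t, P₂ = MStep.N :: t := by
        cases P₂ with
        | nil => simp at hP₂head
        | cons b t =>
          refine ⟨t, ?_⟩
          simp only [List.head?_cons, Option.some.injEq] at hP₂head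
          rw [hP₂head]
      have hTR : typeRaw R = (W ++ [MStep.N]) ++ typeRaw ((MStep.N :: t) ++ P₃) := by
        rw [hRdec, List.append_assoc, List.append_assoc, typeRaw_append, ← hW1]
        rfl
      have hTS : typeRaw S = (W ++ [MStep.E]) ++ typeRaw ((MStep.N :: t) ++ ([MStep.E] ++ P₃)) := by
        rw [hSdec, List.append_assoc, List.append_assoc, typeRaw_append, ← hW2]
        rfl
      have hY : typeRaw ((MStep.N :: t) ++ P₃) ≠ [] := by
        intro h
        have := length_typeRaw ((MStep.N :: t) ++ P₃)
        rw [h] at this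
        simp [List.count_cons] at this
      have hY' : typeRaw ((MStep.N :: t) ++ ([MStep.E] ++ P₃)) ≠ [] := by
        intro h
        have := length_typeRaw ((MStep.N :: t) ++ ([MStep.E] ++ P₃))
        rw [h] at this
        simp [List.count_cons] at this
      have hTW : typeW R = typeW S := hT
      unfold typeW at hTW
      rw [hTR] at hTW
      rw [List.dropLast_append, if_neg (by simpa using hY)] at hTW
      rw [hTS] at hTW
      rw [List.dropLast_append, if_neg (by simpa using hY')] at hTW
      rw [List.append_assoc, List.append_assoc] at hTW
      have := List.append_cancel_left hTW
      simp at this
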